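/- Let Λ = {n₀ < n₁ < ...} ⊂ ℕ be a set of positive integers such that sup_k |Λ ∩ [2^k, 2^{k+1})| ≤ N for some finite N. Then Λ is a finite union of quasi-independent sets; in fact a union of 2N sets each of which satisfies k(j+1) > Σ_{i≤j} k(i) for its increasing enumeration (k(j)). -/

import Mathlib

/-- A set `Λ` of positive integers is quasi-independent if the only relation
`∑ ξ_n · n = 0` with coefficients `ξ_n ∈ {-1,0,1}` supported on a finite
subset of `Λ` is the trivial one. -/
def QuasiIndependent (Λ : Set ℕ) : Prop :=
  ∀ F : Finset ℕ, ↑F ⊆ Λ → ∀ ξ : ℕ → ℤ,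
    (∀ n, ξ n ∈ ({-1, 0, 1} : Set ℤ)) →
    ∑ n ∈ F, ξ n * (n : ℤ) = 0 → ∀ n ∈ F, ξ n = 0

/-- A set `S ⊆ ℕ` is super-increasing (i.e. its increasing enumeration `k(j)`
satisfies `k(j+1) > ∑_{i ≤ j} k(i)`) iff each of its elements is larger than
the sum of any finite set of smaller elements of `S`. -/
def SuperIncreasing (S : Set ℕ) : Prop :=
  ∀ b ∈ S, ∀ F : Finset ℕ, ↑F ⊆ S → (∀ a ∈ F, a < b) → ∑ a ∈ F, a < b

/-- A super-increasing set is quasi-independent (knapsack argument). -/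
lemma superIncreasing_quasiIndependent {S : Set ℕ} (h : SuperIncreasing S) :
    QuasiIndependent S := by
  classical
  intro F hF ξ hξ hsum
  by_contra hc
  push_neg at hc
  obtain ⟨n0, hn0, hξn0⟩ := hc
  set F' := F.filter (fun n => ξ n ≠ 0) with hF'def
  have hne : F'.Nonempty := ⟨n0, Finset.mem_filter.2 ⟨hn0, hξn0⟩⟩
  set b := F'.max' hne with hbdef
  have hbF' : b ∈ F' := F'.max'_mem hne
  have hbF : b ∈ F := (Finset.mem_filter.1 hbF').1
  have hξb : ξ b ≠ 0 := (Finset.mem_filter.1 hbF').2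
  have hsum' : ∑ n ∈ F', ξ n * (n : ℤ) = 0 := by
    rw [← hsum]
    exact Finset.sum_filter_of_ne (fun x _ hx => by
      intro h0; apply hx; rw [h0, zero_mul])
  have heq : ξ b * (b : ℤ) + ∑ n ∈ F'.erase b, ξ n * (n : ℤ) = 0 :=
    (Finset.add_sum_erase F' (fun n => ξ n * (n : ℤ)) hbF').trans hsum'
  have habsb : |ξ b * (b : ℤ)| = (b : ℤ) := by
    have h3 := hξ b
    simp only [Set.mem_insert_iff, Set.mem_singleton_iff] at h3
    rw [abs_mul]
    rcases h3 with h1 | h1 | h1 <;> simp [h1] <;> simp [h1] at hξb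
  have habs : (b : ℤ) ≤ |∑ n ∈ F'.erase b, ξ n * (n : ℤ)| := by
    have : ξ b * (b : ℤ) = -∑ n ∈ F'.erase b, ξ n * (n : ℤ) := by linarith
    rw [← habsb, this, abs_neg]
  have hbound : |∑ n ∈ F'.erase b, ξ n * (n : ℤ)| ≤ ∑ n ∈ F'.erase b, (n : ℤ) := by
    refine (Finset.abs_sum_le_sum_abs _ _).trans (Finset.sum_le_sum fun n _ => ?_)
    rw [abs_mul]
    have : |ξ n| ≤ 1 := by
      have h3 := hξ n
      simp only [Set.mem_insert_iff, Set.mem_singleton_iff] at h3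
      rcases h3 with h1 | h1 | h1 <;> simp [h1]
    calc |ξ n| * |(n : ℤ)| ≤ 1 * |(n : ℤ)| := by
          apply mul_le_mul_of_nonneg_right this (abs_nonneg _)
      _ = (n : ℤ) := by rw [one_mul, abs_of_nonneg (by positivity)]
  have hlt : ∑ n ∈ F'.erase b, n < b := by
    apply h b (hF hbF)
    · intro a ha
      have ha' : a ∈ F' := Finset.mem_of_mem_erase ha
      exact hF (Finset.mem_filter.1 ha').1
    · intro a ha
      exact lt_of_le_of_ne (F'.le_max' a (Finset.mem_of_mem_erase ha))
        (Finset.ne_of_mem_erase ha)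
  have : (b : ℤ) ≤ ∑ n ∈ F'.erase b, (n : ℤ) := le_trans habs hbound
  rw [← Nat.cast_sum] at this
  exact absurd (Nat.cast_le.1 this) (not_le.2 hlt)

/-- Sum of `2^(j+1)` over a finite set of naturals all below `k` and of the
same parity as `k` is less than `2^k`. -/
lemma sum_pow_lt (k : ℕ) : ∀ T : Finset ℕ,
    (∀ j ∈ T, j < k ∧ j % 2 = k % 2) → ∑ j ∈ T, 2 ^ (j + 1) < 2 ^ k := by
  induction k using Nat.strong_induction_on with
  | _ k ih =>
    intro T hT
    rcases T.eq_empty_or_nonempty with rfl | hne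
    · simpa using Nat.pos_pow_of_pos k (by norm_num)
    · set j0 := T.max' hne with hj0def
      have hj0 := hT j0 (T.max'_mem hne)
      have h2 : j0 + 2 ≤ k := by omega
      have hrest : ∑ j ∈ T.erase j0, 2 ^ (j + 1) < 2 ^ (k - 2) := by
        apply ih (k - 2) (by omega)
        intro j hj
        have hmem := Finset.mem_of_mem_erase hj
        have hjk := hT j hmem
        have hlt : j < j0 :=
          lt_of_le_of_ne (T.le_max' j hmem) (Finset.ne_of_mem_erase hj)
        omega
      have hsplit : ∑ j ∈ T, 2 ^ (j + 1)
          = 2 ^ (j0 + 1) + ∑ j ∈ T.erase j0, 2 ^ (j + 1) :=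
        (Finset.add_sum_erase _ _ (T.max'_mem hne)).symm
      rw [hsplit]
      have h1 : 2 ^ (j0 + 1) ≤ 2 ^ (k - 1) :=
        Nat.pow_le_pow_right (by norm_num) (by omega)
      have hk1 : 2 ^ (k - 2) ≤ 2 ^ (k - 1) :=
        Nat.pow_le_pow_right (by norm_num) (by omega)
      have hdbl : 2 ^ (k - 1) + 2 ^ (k - 1) = 2 ^ k := by
        rw [← two_mul, ← pow_succ']
        congr 1
        omega
      omega

/-- Rank of `n` within its dyadic block of `Λ`. -/
noncomputable def rankIn (Λ : Set ℕ) (n : ℕ) : ℕ :=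
  (Λ ∩ Set.Ico (2 ^ Nat.log 2 n) (2 ^ (Nat.log 2 n + 1)) ∩ Set.Iio n).ncard

lemma rankIn_lt_rankIn (Λ : Set ℕ) {m n : ℕ} (hm : m ∈ Λ) (hmpos : 0 < m)
    (hlog : Nat.log 2 m = Nat.log 2 n) (hmn : m < n) :
    rankIn Λ m < rankIn Λ n := by
  apply Set.ncard_lt_ncard
  · constructor
    · rintro x ⟨⟨hxΛ, hxIco⟩, hxlt⟩
      rw [hlog] at hxIco
      exact ⟨⟨hxΛ, hxIco⟩, lt_trans hxlt hmn⟩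
    · intro hsub
      have hmmem : m ∈ Λ ∩ Set.Ico (2 ^ Nat.log 2 m) (2 ^ (Nat.log 2 m + 1)) ∩ Set.Iio m := by
        apply hsub
        refine ⟨⟨hm, ?_, ?_⟩, hmn⟩
        · rw [← hlog]; exact Nat.pow_log_le_self 2 hmpos.ne'
        · rw [← hlog]; exact Nat.lt_pow_succ_log_self (by norm_num) m
      exact absurd hmmem.2 (lt_irrefl m)
  · exact (Set.finite_Iio n).subset (fun x hx => hx.2)

lemma rankIn_inj (Λ : Set ℕ) {m n : ℕ} (hmpos : 0 < m) (hnpos : 0 < n)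
    (hm : m ∈ Λ) (hn : n ∈ Λ) (hlog : Nat.log 2 m = Nat.log 2 n)
    (hr : rankIn Λ m = rankIn Λ n) : m = n := by
  rcases lt_trichotomy m n with h | h | h
  · exact absurd hr (ne_of_lt (rankIn_lt_rankIn Λ hm hmpos hlog h))
  · exact h
  · exact absurd hr.symm (ne_of_lt (rankIn_lt_rankIn Λ hn hnpos hlog.symm h))

theorem dyadic_blocks_implies_finite_union_quasiindependent
    (Λ : Set ℕ) (hpos : ∀ n ∈ Λ, 0 < n) (N : ℕ)
    (hblocks : ∀ k : ℕ, (Λ ∩ Set.Ico (2 ^ k) (2 ^ (k + 1))).ncard ≤ N) :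
    ∃ parts : Fin (2 * N) → Set ℕ,
      Λ = ⋃ i, parts i ∧
      ∀ i, SuperIncreasing (parts i) ∧ QuasiIndependent (parts i) := by
  classical
  -- the index of n
  set idx : ℕ → ℕ := fun n => 2 * rankIn Λ n + Nat.log 2 n % 2 with hidx
  -- ranks are < N
  have hrank : ∀ n ∈ Λ, rankIn Λ n < N := by
    intro n hn
    have hnpos := hpos n hn
    have hfin : (Λ ∩ Set.Ico (2 ^ Nat.log 2 n) (2 ^ (Nat.log 2 n + 1))).Finite :=
      (Set.finite_Ico _ _).subset (fun x hx => hx.2)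
    have hlt : rankIn Λ n < (Λ ∩ Set.Ico (2 ^ Nat.log 2 n) (2 ^ (Nat.log 2 n + 1))).ncard := by
      apply Set.ncard_lt_ncard _ hfin
      constructor
      · exact fun x hx => hx.1
      · intro hsub
        have : n ∈ Λ ∩ Set.Ico (2 ^ Nat.log 2 n) (2 ^ (Nat.log 2 n + 1)) ∩ Set.Iio n := by
          apply hsub
          exact ⟨hn, Nat.pow_log_le_self 2 hnpos.ne',
            Nat.lt_pow_succ_log_self (by norm_num) n⟩
        exact absurd this.2 (lt_irrefl n)
    exact lt_of_lt_of_le hlt (hblocks _)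
  have hidxlt : ∀ n ∈ Λ, idx n < 2 * N := by
    intro n hn
    have h1 := hrank n hn
    have h2 : Nat.log 2 n % 2 < 2 := Nat.mod_lt _ (by norm_num)
    simp only [hidx]
    omega
  refine ⟨fun i => {n | n ∈ Λ ∧ idx n = (i : ℕ)}, ?_, ?_⟩
  · ext n
    simp only [Set.mem_iUnion, Set.mem_setOf_eq]
    constructor
    · intro hn
      exact ⟨⟨idx n, hidxlt n hn⟩, hn, rfl⟩
    · rintro ⟨i, hn, _⟩
      exact hn
  · intro i
    set P : Set ℕ := {n | n ∈ Λ ∧ idx n = (i : ℕ)} with hP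
    have hsi : SuperIncreasing P := by
      intro b hb F hF hFlt
      obtain ⟨hbΛ, hbidx⟩ := hb
      set k := Nat.log 2 b with hk
      -- key facts about elements of F
      have hkey : ∀ a ∈ F, a ∈ Λ ∧ Nat.log 2 a < k ∧ Nat.log 2 a % 2 = k % 2 := by
        intro a ha
        obtain ⟨haΛ, haidx⟩ := hF ha
        have hpar : Nat.log 2 a % 2 = k % 2 ∧ rankIn Λ a = rankIn Λ b := by
          have h1 : Nat.log 2 a % 2 < 2 := Nat.mod_lt _ (by norm_num)
          have h2 : Nat.log 2 b % 2 < 2 := Nat.mod_lt _ (by norm_num)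
          have := haidx.trans hbidx.symm
          simp only [hidx] at this
          constructor <;> omega
        have hlogle : Nat.log 2 a ≤ k := Nat.log_mono_right (le_of_lt (hFlt a ha))
        have hne : Nat.log 2 a ≠ k := by
          intro heq
          have := rankIn_inj Λ (hpos a haΛ) (hpos b hbΛ) haΛ hbΛ heq hpar.2
          exact absurd this (ne_of_lt (hFlt a ha))
        exact ⟨haΛ, lt_of_le_of_ne hlogle hne, hpar.1⟩
      -- log is injective on F
      have hinj : ∀ x ∈ F, ∀ y ∈ F, Nat.log 2 x = Nat.log 2 y → x = y := by
        intro x hx y hy hxy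
        obtain ⟨hxΛ, hxidx⟩ := hF hx
        obtain ⟨hyΛ, hyidx⟩ := hF hy
        have hr : rankIn Λ x = rankIn Λ y := by
          have := hxidx.trans hyidx.symm
          simp only [hidx] at this
          omega
        exact rankIn_inj Λ (hpos x hxΛ) (hpos y hyΛ) hxΛ hyΛ hxy hr
      calc ∑ a ∈ F, a ≤ ∑ a ∈ F, (2 ^ (Nat.log 2 a + 1) - 1) :=
            Finset.sum_le_sum fun a _ => by
              have := Nat.lt_pow_succ_log_self (show 1 < 2 by norm_num) a
              omega
        _ = ∑ j ∈ F.image (Nat.log 2), (2 ^ (j + 1) - 1) :=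
            (Finset.sum_image (f := fun j => 2 ^ (j + 1) - 1) hinj).symm
        _ ≤ ∑ j ∈ F.image (Nat.log 2), 2 ^ (j + 1) :=
            Finset.sum_le_sum fun j _ => Nat.sub_le _ _
        _ < 2 ^ k := by
            apply sum_pow_lt
            intro j hj
            obtain ⟨a, ha, rfl⟩ := Finset.mem_image.1 hj
            exact ⟨(hkey a ha).2.1, (hkey a ha).2.2⟩
        _ ≤ b := Nat.pow_log_le_self 2 (hpos b hbΛ).ne'
    exact ⟨hsi, superIncreasing_quasiIndependent hsi⟩
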